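/- Let d ≥ 2 be an integer and a > 0. Let W be continuously differentiable on [0,∞) with W(0) = 0 and suppose there are constants c, C > 0 with c·s ≤ W'(s) ≤ C·s for all s > 0. Let F be continuously differentiable on [0,∞) with F(0) = 0, and suppose the function g(s) := s^{d−1} F(s)/W'(s) is continuously differentiable on (0,∞) with g(s) → 0 as s → 0⁺ and g' locally integrable on [0,∞). Define U(r) := (r^{1−d}/a) ∫₀^r s^{d−1} e^{−W(r)+W(s)} F(s) ds for r > 0. Then U is continuously differentiable on (0,∞) and for every r > 0: U'(r) + ((d−1)/r) U(r) = W'(r) · (r^{1−d}/a) ∫₀^r e^{−W(r)+W(s)} g'(s) ds. -/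

import Mathlib

open Real MeasureTheory Filter Set
open scoped Topology

noncomputable section

/-- Integration-by-parts identity:
`U'(r) + ((d−1)/r) U(r) = W'(r) (r^{1−d}/a) ∫₀^r e^{−W(r)+W(s)} g'(s) ds`,
where `U(r) = (r^{1−d}/a) ∫₀^r s^{d−1} e^{−W(r)+W(s)} F(s) ds` and
`g(s) = s^{d−1} F(s)/W'(s)`. -/
theorem integration_by_parts_identity
    (d : ℕ) (hd : 2 ≤ d) (a : ℝ) (ha : 0 < a)
    (W F g : ℝ → ℝ)
    (hW : ContDiffOn ℝ 1 W (Ici 0)) (hW0 : W 0 = 0)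
    (c C : ℝ) (hc : 0 < c) (hC : 0 < C)
    (hW' : ∀ s > 0, c * s ≤ deriv W s ∧ deriv W s ≤ C * s)
    (hF : ContDiffOn ℝ 1 F (Ici 0)) (hF0 : F 0 = 0)
    (hg : ∀ s > 0, g s = s ^ ((d : ℝ) - 1) * F s / deriv W s)
    (hgC1 : ContDiffOn ℝ 1 g (Ioi 0))
    (hg0 : Tendsto g (𝓝[>] (0:ℝ)) (𝓝 0))
    (hg' : LocallyIntegrableOn (deriv g) (Ici 0)) :
    ContDiffOn ℝ 1
      (fun r => r ^ ((1:ℝ) - (d : ℝ)) / a *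
        ∫ s in (0:ℝ)..r, s ^ ((d : ℝ) - 1) * Real.exp (-W r + W s) * F s)
      (Ioi 0) ∧
    ∀ r > 0,
      deriv (fun t => t ^ ((1:ℝ) - (d : ℝ)) / a *
          ∫ s in (0:ℝ)..t, s ^ ((d : ℝ) - 1) * Real.exp (-W t + W s) * F s) r
        + ((d : ℝ) - 1) / r *
          (r ^ ((1:ℝ) - (d : ℝ)) / a *
            ∫ s in (0:ℝ)..r, s ^ ((d : ℝ) - 1) * Real.exp (-W r + W s) * F s)
      = deriv W r * (r ^ ((1:ℝ) - (d : ℝ)) / a) *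
          ∫ s in (0:ℝ)..r, Real.exp (-W r + W s) * deriv g s := by
  

  set h : ℝ → ℝ := fun s => s ^ ((d : ℝ) - 1) * Real.exp (W s) * F s with hhdef
  set J : ℝ → ℝ := fun t => ∫ s in (0:ℝ)..t, h s with hJdef
  have hd0 : (0:ℝ) < (d:ℝ) - 1 := by
    have : (2:ℝ) ≤ (d:ℝ) := by exact_mod_cast hd
    linarith
  have hWc : ContinuousOn W (Ici 0) := hW.continuousOn
  have hFc : ContinuousOn F (Ici 0) := hF.continuousOn
  have hhc : ContinuousOn h (Ici 0) := by
    apply ContinuousOn.mul _ hFc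
    apply ContinuousOn.mul _ (Real.continuous_exp.comp_continuousOn hWc)
    exact fun x _ => (Real.continuousAt_rpow_const x _ (Or.inr hd0.le)).continuousWithinAt
  have hWd : ∀ r > (0:ℝ), HasDerivAt W (deriv W r) r := fun r hr =>
    (((hW.differentiableOn one_ne_zero).differentiableAt (Ici_mem_nhds hr)).hasDerivAt)
  have hW'pos : ∀ r > (0:ℝ), 0 < deriv W r := fun r hr =>
    lt_of_lt_of_le (mul_pos hc hr) (hW' r hr).1
  have hJint : ∀ r ≥ (0:ℝ), IntervalIntegrable h volume 0 r := fun r hr => by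
    apply ContinuousOn.intervalIntegrable
    rw [uIcc_of_le hr]
    exact hhc.mono (Icc_subset_Ici_self)
  have hJd : ∀ r > (0:ℝ), HasDerivAt J (h r) r := fun r hr => by
    apply intervalIntegral.integral_hasDerivAt_right (hJint r hr.le)
    · exact (hhc.mono (Ioi_subset_Ici le_rfl)).stronglyMeasurableAtFilter isOpen_Ioi r hr
    · exact hhc.continuousAt (Ici_mem_nhds hr)
  have hJ0 : Tendsto J (𝓝[>] (0:ℝ)) (𝓝 0) := by
    have h1 : ContinuousOn J (uIcc (0:ℝ) 1) := by
      apply intervalIntegral.continuousOn_primitive_interval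
      rw [uIcc_of_le zero_le_one]
      exact (hhc.mono Icc_subset_Ici_self).integrableOn_compact isCompact_Icc
    have h2 := (h1 0 (by rw [uIcc_of_le zero_le_one]; exact ⟨le_refl 0, zero_le_one⟩)).tendsto
    rw [show J 0 = 0 from intervalIntegral.integral_same] at h2
    apply h2.mono_left
    rw [nhdsWithin_le_iff, uIcc_of_le zero_le_one]
    exact Icc_mem_nhdsGT zero_lt_one
  have hexp0 : Tendsto (fun s => Real.exp (W s)) (𝓝[>] (0:ℝ)) (𝓝 1) := by
    have h2 : Tendsto W (𝓝[>] (0:ℝ)) (𝓝 (W 0)) :=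
      (hWc 0 self_mem_Ici).tendsto.mono_left
        (nhdsWithin_mono _ (Ioi_subset_Ici le_rfl))
    rw [hW0] at h2
    simpa [Function.comp_def] using (Real.continuous_exp.continuousAt.tendsto.comp h2)
  have hgd : ∀ s > (0:ℝ), HasDerivAt g (deriv g s) s := fun s hs =>
    ((hgC1.differentiableOn one_ne_zero).differentiableAt (isOpen_Ioi.mem_nhds hs)).hasDerivAt
  have hGd : ∀ s > (0:ℝ),
      HasDerivAt (fun u => Real.exp (W u) * g u - J u) (Real.exp (W s) * deriv g s) s := by
    intro s hs
    have h1 := ((hWd s hs).exp.mul (hgd s hs)).sub (hJd s hs)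
    refine h1.congr_deriv ?_
    have hW's : deriv W s ≠ 0 := (hW'pos s hs).ne'
    rw [hg s hs]
    simp only [hhdef]
    field_simp
    ring
  have hEint : ∀ r > (0:ℝ), IntervalIntegrable (fun s => Real.exp (W s) * deriv g s) volume 0 r := by
    intro r hr
    rw [intervalIntegrable_iff_integrableOn_Ioc_of_le hr.le]
    have h1 : IntegrableOn (deriv g) (Icc 0 r) :=
      hg'.integrableOn_compact_subset Icc_subset_Ici_self isCompact_Icc
    have h2 : ContinuousOn (fun s => Real.exp (W s)) (Icc 0 r) :=
      Real.continuous_exp.comp_continuousOn (hWc.mono Icc_subset_Ici_self)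
    obtain ⟨M, hM⟩ := isCompact_Icc.exists_bound_of_continuousOn h2
    have h3 : Integrable (fun s => Real.exp (W s) * deriv g s) (volume.restrict (Icc 0 r)) :=
      Integrable.bdd_mul h1 (h2.aestronglyMeasurable measurableSet_Icc)
        ((ae_restrict_iff' measurableSet_Icc).2 (Filter.Eventually.of_forall hM))
    exact MeasureTheory.IntegrableOn.mono_set h3 Ioc_subset_Icc_self
  have hIBP : ∀ r > (0:ℝ),
      ∫ s in (0:ℝ)..r, Real.exp (W s) * deriv g s = Real.exp (W r) * g r - J r := by
    intro r hr
    have := intervalIntegral.integral_eq_sub_of_hasDerivAt_of_tendsto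
      (f := fun u => Real.exp (W u) * g u - J u) hr
      (fun x hx => hGd x hx.1) (hEint r hr)
      ((hexp0.mul hg0).sub hJ0)
      ((hGd r hr).continuousAt.continuousWithinAt)
    simpa using this
  have hrw : ∀ t : ℝ, (∫ s in (0:ℝ)..t, s ^ ((d:ℝ)-1) * Real.exp (-W t + W s) * F s)
      = Real.exp (-W t) * J t := by
    intro t
    rw [hJdef, ← intervalIntegral.integral_const_mul]
    apply intervalIntegral.integral_congr
    intro s _
    simp only [hhdef, Real.exp_add]
    ring
  have hfun : (fun t : ℝ => t ^ ((1:ℝ) - (d:ℝ)) / a *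
      ∫ s in (0:ℝ)..t, s ^ ((d:ℝ)-1) * Real.exp (-W t + W s) * F s)
      = fun t => t ^ ((1:ℝ) - (d:ℝ)) / a * (Real.exp (-W t) * J t) := by
    funext t; rw [hrw t]
  have hφd : ∀ r > (0:ℝ), HasDerivAt
      (fun t => t ^ ((1:ℝ)-(d:ℝ)) / a * (Real.exp (-W t) * J t))
      ((((1:ℝ)-(d:ℝ)) * r ^ ((1:ℝ)-(d:ℝ)-1) / a) * (Real.exp (-W r) * J r)
        + r ^ ((1:ℝ)-(d:ℝ)) / a *
          (Real.exp (-W r) * -(deriv W r) * J r + Real.exp (-W r) * h r)) r := by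
    intro r hr
    have h1 : HasDerivAt (fun t : ℝ => t ^ ((1:ℝ)-(d:ℝ)) / a)
        (((1:ℝ)-(d:ℝ)) * r ^ ((1:ℝ)-(d:ℝ)-1) / a) r :=
      (Real.hasDerivAt_rpow_const (Or.inl hr.ne')).div_const a
    have h2 : HasDerivAt (fun t => Real.exp (-W t)) (Real.exp (-W r) * -(deriv W r)) r :=
      (hWd r hr).neg.exp
    exact h1.mul (h2.mul (hJd r hr))
  have hJC1 : ContDiffOn ℝ 1 J (Ioi 0) := by
    have := (contDiffOn_succ_iff_deriv_of_isOpen (𝕜 := ℝ) (f := J) (s := Ioi 0) (n := 0)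
      isOpen_Ioi).mpr ⟨fun x hx => (hJd x hx).differentiableAt.differentiableWithinAt,
        by simp, by
          rw [contDiffOn_zero]
          exact ContinuousOn.congr (hhc.mono (Ioi_subset_Ici le_rfl))
            (fun x hx => (hJd x hx).deriv)⟩
    simpa using this
  have hφC1 : ContDiffOn ℝ 1
      (fun t => t ^ ((1:ℝ)-(d:ℝ)) / a * (Real.exp (-W t) * J t)) (Ioi 0) := by
    apply ContDiffOn.mul
    · exact ContDiffOn.div_const
        (fun x hx => (Real.contDiffAt_rpow_const_of_ne (ne_of_gt hx)).contDiffWithinAt) a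
    · exact (Real.contDiff_exp.comp_contDiffOn
        ((hW.mono (Ioi_subset_Ici le_rfl)).neg)).mul hJC1
  constructor
  · rw [hfun]; exact hφC1
  · intro r hr
    have hrw2 : (∫ s in (0:ℝ)..r, Real.exp (-W r + W s) * deriv g s)
        = Real.exp (-W r) * (Real.exp (W r) * g r - J r) := by
      rw [← hIBP r hr, ← intervalIntegral.integral_const_mul]
      apply intervalIntegral.integral_congr
      intro s _
      simp only [Real.exp_add]; ring
    have hgr : g r * deriv W r = r ^ ((d:ℝ)-1) * F r := by
      rw [hg r hr]
      exact div_mul_cancel₀ _ (hW'pos r hr).ne'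
    have hr1 : r ^ ((1:ℝ)-(d:ℝ)-1) = r ^ ((1:ℝ)-(d:ℝ)) / r := by
      rw [Real.rpow_sub hr, Real.rpow_one]
    rw [hfun, hrw r, hrw2, (hφd r hr).deriv, hr1]
    simp only [hhdef]
    linear_combination (-(r ^ ((1:ℝ)-(d:ℝ)) / a * Real.exp (-W r) * Real.exp (W r))) * hgr
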